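/- In the call-by-value probabilistic λ-calculus Λ⊕^cbv, the lifted probabilistic choice reduction ⇒⊕ satisfies the diamond property: if 𝔪 ⇒⊕ 𝔫 and 𝔪 ⇒⊕ 𝔰, then there exists 𝔯 with 𝔫 ⇒⊕ 𝔯 and 𝔰 ⇒⊕ 𝔯. -/
import Mathlib

open scoped NNReal ENNReal

/-- A (raw) multidistribution on `X`: a finite multiset of weighted elements. -/
abbrev MDist (X : Type) := Multiset (ℝ≥0 × X)

namespace MDist

/-- Scalar multiplication of a multidistribution. -/
def scale {X : Type} (p : ℝ≥0) (m : MDist X) : MDist X :=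
  m.map fun q => (p * q.1, q.2)

/-- The singleton multidistribution `[1 M]`. -/
def single {X : Type} (M : X) : MDist X := {(1, M)}

/-- A multidistribution is proper when every weight lies in `(0,1]` and the
weights sum to at most `1`. -/
def Proper {X : Type} (m : MDist X) : Prop :=
  (∀ q ∈ m, 0 < q.1 ∧ q.1 ≤ 1) ∧ (m.map Prod.fst).sum ≤ 1

/-- The probability that the distribution associated to a multidistribution
assigns to an event `A`. -/
noncomputable def mass {X : Type} (m : MDist X) (A : Set X) : ℝ≥0∞ :=
  (m.map fun q => A.indicator (fun _ => (q.1 : ℝ≥0∞)) q.2).sum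

end MDist

/-- One component of the lifting: either keep the term or perform a step. -/
def LiftTerm {X : Type} (r : X → MDist X → Prop) (M : X) (m : MDist X) : Prop :=
  m = MDist.single M ∨ r M m

/-- The lifting of a relation `r ⊆ X × MDist X` to a binary relation on
multidistributions. -/
inductive Lift {X : Type} (r : X → MDist X → Prop) : MDist X → MDist X → Prop
  | nil : Lift r 0 0
  | cons {p : ℝ≥0} {M : X} {m s t : MDist X} :
      LiftTerm r M m → Lift r s t → Lift r ((p, M) ::ₘ s) (MDist.scale p m + t)
/-- Terms of `Λ⊕` (de Bruijn representation). -/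
inductive Term : Type
  | var : ℕ → Term
  | lam : Term → Term
  | app : Term → Term → Term
  | choice : Term → Term → Term
deriving DecidableEq

namespace Term

/-- Shifting of de Bruijn indices above a cutoff. -/
def liftAux (c : ℕ) : Term → Term
  | var k => if k < c then var k else var (k + 1)
  | lam M => lam (liftAux (c + 1) M)
  | app M N => app (liftAux c M) (liftAux c N)
  | choice M N => choice (liftAux c M) (liftAux c N)

/-- Capture-avoiding substitution `M[N/j]`. -/
def subst : Term → ℕ → Term → Term
  | var k, j, N => if k = j then N else if j < k then var (k - 1) else var k
  | lam M, j, N => lam (subst M (j + 1) (liftAux 0 N))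
  | app M P, j, N => app (subst M j N) (subst P j N)
  | choice M P, j, N => choice (subst M j N) (subst P j N)

/-- Values: variables and abstractions. -/
inductive IsValue : Term → Prop
  | var (n : ℕ) : IsValue (var n)
  | lam (M : Term) : IsValue (lam M)

/-- `β_v`-reduction, closed under arbitrary contexts. -/
inductive BetaStep : Term → Term → Prop
  | beta {M V : Term} : IsValue V → BetaStep (app (lam M) V) (subst M 0 V)
  | appL {M M' N : Term} : BetaStep M M' → BetaStep (app M N) (app M' N)
  | appR {M N N' : Term} : BetaStep N N' → BetaStep (app M N) (app M N')
  | lam {M M' : Term} : BetaStep M M' → BetaStep (lam M) (lam M')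
  | chL {M M' N : Term} : BetaStep M M' → BetaStep (choice M N) (choice M' N)
  | chR {M N N' : Term} : BetaStep N N' → BetaStep (choice M N) (choice M N')

/-- Surface `β_v`-reduction: closure under surface contexts `S ::= □ | MS | SM`. -/
inductive SurfBetaStep : Term → Term → Prop
  | beta {M V : Term} : IsValue V → SurfBetaStep (app (lam M) V) (subst M 0 V)
  | appL {M M' N : Term} : SurfBetaStep M M' → SurfBetaStep (app M N) (app M' N)
  | appR {M N N' : Term} : SurfBetaStep N N' → SurfBetaStep (app M N) (app M N')

/-- `PlusStep M A B` holds when `M = S(P ⊕ Q)`, `A = S(P)`, `B = S(Q)` for a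
surface context `S ::= □ | MS | SM`. -/
inductive PlusStep : Term → Term → Term → Prop
  | choice {M N : Term} : PlusStep (choice M N) M N
  | appL {M A B N : Term} : PlusStep M A B → PlusStep (app M N) (app A N) (app B N)
  | appR {M N A B : Term} : PlusStep N A B → PlusStep (app M N) (app M A) (app M B)

end Term

open Term

/-- The reduction `→_{β_v} ⊆ Λ⊕ × MDST(Λ⊕)`. -/
def betaRed (M : Term) (m : MDist Term) : Prop :=
  ∃ N, BetaStep M N ∧ m = MDist.single N

/-- The probabilistic reduction `→_⊕ ⊆ Λ⊕ × MDST(Λ⊕)`. -/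
def plusRed (M : Term) (m : MDist Term) : Prop :=
  ∃ A B, PlusStep M A B ∧ m = {((1 : ℝ≥0) / 2, A), ((1 : ℝ≥0) / 2, B)}

/-- The full reduction `→ = →_{β_v} ∪ →_⊕`. -/
def red (M : Term) (m : MDist Term) : Prop := betaRed M m ∨ plusRed M m

/-- Surface reduction `→ₛ`: β_v and ⊕ rules closed under surface contexts. -/
def surfRed (M : Term) (m : MDist Term) : Prop :=
  (∃ N, SurfBetaStep M N ∧ m = MDist.single N) ∨ plusRed M m

/-- A step is deep when it is not a surface step. -/
def deepRed (M : Term) (m : MDist Term) : Prop := red M m ∧ ¬ surfRed M m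


namespace MDist

lemma scale_cons {X : Type} (p q : ℝ≥0) (M : X) (m : MDist X) :
    scale p ((q, M) ::ₘ m) = (p * q, M) ::ₘ scale p m := Multiset.map_cons _ _ _

lemma scale_add {X : Type} (p : ℝ≥0) (m n : MDist X) :
    scale p (m + n) = scale p m + scale p n := Multiset.map_add _ _ _

lemma scale_scale {X : Type} (p q : ℝ≥0) (m : MDist X) :
    scale p (scale q m) = scale (p * q) m := by
  simp [scale, Multiset.map_map, Function.comp, mul_assoc]

lemma scale_one {X : Type} (m : MDist X) : scale 1 m = m := by
  simp [scale]

end MDist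

lemma Lift.refl {X : Type} (r : X → MDist X → Prop) (m : MDist X) : Lift r m m := by
  induction m using Multiset.induction with
  | empty => exact Lift.nil
  | cons a s ih =>
    have h := Lift.cons (p := a.1) (M := a.2) (Or.inl rfl) ih
    simpa [MDist.single, MDist.scale] using h

lemma Lift.eq_zero {X : Type} {r : X → MDist X → Prop} {m s : MDist X}
    (h : Lift r m s) (hm : m = 0) : s = 0 := by
  cases h with
  | nil => rfl
  | cons _ _ => simp at hm

lemma Lift.cons_inv {X : Type} {r : X → MDist X → Prop} {m n : MDist X}
    (h : Lift r m n) : ∀ (p : ℝ≥0) (M : X) (s : MDist X), m = (p, M) ::ₘ s →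
      ∃ m1 t1, LiftTerm r M m1 ∧ Lift r s t1 ∧ n = MDist.scale p m1 + t1 := by
  induction h with
  | nil => intro p M s hm; simp at hm
  | @cons q N mm ss tt h1 h2 ih =>
    intro p M s hm
    rcases Multiset.cons_eq_cons.mp hm with ⟨heq, hs⟩ | ⟨hne, cs, h4, h5⟩
    · injection heq with e1 e2
      subst e1; subst e2; subst hs
      exact ⟨mm, tt, h1, h2, rfl⟩
    · obtain ⟨m1, t1, hm1, ht1, rfl⟩ := ih p M cs h4
      refine ⟨m1, MDist.scale q mm + t1, hm1, ?_, ?_⟩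
      · rw [h5]; exact Lift.cons h1 ht1
      · rw [add_left_comm]

lemma Lift.add' {X : Type} {r : X → MDist X → Prop} {a b c d : MDist X}
    (h1 : Lift r a b) (h2 : Lift r c d) : Lift r (a + c) (b + d) := by
  induction h1 with
  | nil => simpa using h2
  | @cons p M mm ss tt hl _ ih =>
    have h := Lift.cons (p := p) hl ih
    simpa [add_assoc, Multiset.cons_add] using h

lemma Lift.scale' {X : Type} {r : X → MDist X → Prop} (p : ℝ≥0) {a b : MDist X}
    (h : Lift r a b) : Lift r (MDist.scale p a) (MDist.scale p b) := by
  induction h with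
  | nil => exact Lift.nil
  | @cons q M mm ss tt hl _ ih =>
    have h := Lift.cons (p := p * q) (M := M) hl ih
    simpa [MDist.scale_cons, MDist.scale_add, MDist.scale_scale] using h

lemma Lift.ofLiftTerm {X : Type} {r : X → MDist X → Prop} {M : X} {m : MDist X}
    (h : LiftTerm r M m) : Lift r (MDist.single M) m := by
  have h2 := Lift.cons (p := 1) h Lift.nil
  simpa [MDist.single, MDist.scale_one] using h2

lemma PlusStep.diamond : ∀ {M A B C D : Term}, PlusStep M A B → PlusStep M C D →
    (A = C ∧ B = D) ∨
    ∃ AC AD BC BD, PlusStep A AC AD ∧ PlusStep B BC BD ∧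
      PlusStep C AC BC ∧ PlusStep D AD BD := by
  intro M A B C D h1 h2
  induction h1 generalizing C D with
  | choice =>
    cases h2 with
    | choice => exact Or.inl ⟨rfl, rfl⟩
  | @appL P A' B' Q h ih =>
    cases h2 with
    | appL h' =>
      rcases ih h' with ⟨rfl, rfl⟩ | ⟨AC, AD, BC, BD, hA, hB, hC, hD⟩
      · exact Or.inl ⟨rfl, rfl⟩
      · exact Or.inr ⟨_, _, _, _, PlusStep.appL hA, PlusStep.appL hB,
          PlusStep.appL hC, PlusStep.appL hD⟩
    | appR h' =>
      exact Or.inr ⟨_, _, _, _, PlusStep.appR h', PlusStep.appR h',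
        PlusStep.appL h, PlusStep.appL h⟩
  | @appR P Q A' B' h ih =>
    cases h2 with
    | appL h' =>
      exact Or.inr ⟨_, _, _, _, PlusStep.appL h', PlusStep.appL h',
        PlusStep.appR h, PlusStep.appR h⟩
    | appR h' =>
      rcases ih h' with ⟨rfl, rfl⟩ | ⟨AC, AD, BC, BD, hA, hB, hC, hD⟩
      · exact Or.inl ⟨rfl, rfl⟩
      · exact Or.inr ⟨_, _, _, _, PlusStep.appR hA, PlusStep.appR hB,
          PlusStep.appR hC, PlusStep.appR hD⟩

lemma lift_plus_pair {A AC AD B BC BD : Term}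
    (hA : PlusStep A AC AD) (hB : PlusStep B BC BD) :
    Lift plusRed ({((1 : ℝ≥0) / 2, A), ((1 : ℝ≥0) / 2, B)} : MDist Term)
      (((1 : ℝ≥0) / 2 * (1 / 2), AC) ::ₘ ((1 : ℝ≥0) / 2 * (1 / 2), AD) ::ₘ
       ((1 : ℝ≥0) / 2 * (1 / 2), BC) ::ₘ {((1 : ℝ≥0) / 2 * (1 / 2), BD)}) := by
  have hLA : LiftTerm plusRed A ({((1 : ℝ≥0) / 2, AC), ((1 : ℝ≥0) / 2, AD)} : MDist Term) :=
    Or.inr ⟨AC, AD, hA, rfl⟩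
  have hLB : LiftTerm plusRed B ({((1 : ℝ≥0) / 2, BC), ((1 : ℝ≥0) / 2, BD)} : MDist Term) :=
    Or.inr ⟨BC, BD, hB, rfl⟩
  have h := Lift.cons (p := (1 : ℝ≥0) / 2) hLA
    (Lift.cons (p := (1 : ℝ≥0) / 2) hLB Lift.nil)
  have e : (MDist.scale ((1 : ℝ≥0) / 2) {((1 : ℝ≥0) / 2, AC), ((1 : ℝ≥0) / 2, AD)} +
      (MDist.scale ((1 : ℝ≥0) / 2) {((1 : ℝ≥0) / 2, BC), ((1 : ℝ≥0) / 2, BD)} + 0))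
      = (((1 : ℝ≥0) / 2 * (1 / 2), AC) ::ₘ ((1 : ℝ≥0) / 2 * (1 / 2), AD) ::ₘ
        ((1 : ℝ≥0) / 2 * (1 / 2), BC) ::ₘ {((1 : ℝ≥0) / 2 * (1 / 2), BD)}) := rfl
  exact e ▸ h

lemma liftTerm_diamond {M : Term} {m1 m2 : MDist Term}
    (h1 : LiftTerm plusRed M m1) (h2 : LiftTerm plusRed M m2) :
    ∃ k, Lift plusRed m1 k ∧ Lift plusRed m2 k := by
  rcases h1 with rfl | h1
  · exact ⟨m2, Lift.ofLiftTerm h2, Lift.refl _ _⟩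
  rcases h2 with rfl | h2
  · exact ⟨m1, Lift.refl _ _, Lift.ofLiftTerm (Or.inr h1)⟩
  obtain ⟨A, B, hAB, rfl⟩ := h1
  obtain ⟨C, D, hCD, rfl⟩ := h2
  rcases PlusStep.diamond hAB hCD with ⟨rfl, rfl⟩ | ⟨AC, AD, BC, BD, hA, hB, hC, hD⟩
  · exact ⟨_, Lift.refl _ _, Lift.refl _ _⟩
  · refine ⟨_, lift_plus_pair hA hB, ?_⟩
    have h := lift_plus_pair hC hD
    have heq : (((1 : ℝ≥0) / 2 * (1 / 2), AC) ::ₘ ((1 : ℝ≥0) / 2 * (1 / 2), BC) ::ₘ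
       ((1 : ℝ≥0) / 2 * (1 / 2), AD) ::ₘ {((1 : ℝ≥0) / 2 * (1 / 2), BD)})
       = (((1 : ℝ≥0) / 2 * (1 / 2), AC) ::ₘ ((1 : ℝ≥0) / 2 * (1 / 2), AD) ::ₘ
       ((1 : ℝ≥0) / 2 * (1 / 2), BC) ::ₘ {((1 : ℝ≥0) / 2 * (1 / 2), BD)}) := by
      rw [Multiset.cons_swap (((1 : ℝ≥0) / 2 * (1 / 2), BC)) (((1 : ℝ≥0) / 2 * (1 / 2), AD))]
    rw [heq] at h
    exact h

/-- In `Λ⊕^cbv`, the lifted probabilistic reduction `⇒⊕` is diamond. -/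
theorem lift_plus_diamond :
    ∀ m n s : MDist Term, Lift plusRed m n → Lift plusRed m s →
      ∃ r, Lift plusRed n r ∧ Lift plusRed s r := by
  intro m n s h1 h2
  induction h1 generalizing s with
  | nil => exact ⟨0, Lift.nil, by rw [h2.eq_zero rfl]; exact Lift.nil⟩
  | @cons p M mm ss tt hl hr ih =>
    obtain ⟨m2, t2, hl2, hr2, rfl⟩ := h2.cons_inv p M ss rfl
    obtain ⟨k, hk1, hk2⟩ := liftTerm_diamond hl hl2
    obtain ⟨u, hu1, hu2⟩ := ih _ hr2
    exact ⟨MDist.scale p k + u, Lift.add' (Lift.scale' p hk1) hu1,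
      Lift.add' (Lift.scale' p hk2) hu2⟩
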